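/- Let n be a natural number and let T be a computable tree over Fin n. If the set [T] of infinite paths of T is finite, then every infinite path of T is a computable function ℕ → Fin n. -/

import Mathlib

/-- The initial segment (f 0, …, f (k-1)) of an infinite sequence f. -/
def initSeg {n : ℕ} (f : ℕ → Fin n) (k : ℕ) : List (Fin n) :=
  List.ofFn (fun i : Fin k => f i)

/-- A tree over `Fin n`: a set of finite strings closed under taking prefixes. -/
def IsTree {n : ℕ} (T : Set (List (Fin n))) : Prop :=
  ∀ σ ∈ T, ∀ τ, τ <+: σ → τ ∈ T

/-- `f` is an infinite path of `T`: every initial segment of `f` belongs to `T`. -/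
def IsPath {n : ℕ} (T : Set (List (Fin n))) (f : ℕ → Fin n) : Prop :=
  ∀ k : ℕ, initSeg f k ∈ T

/- ### Auxiliary lemmas about `initSeg` -/

theorem initSeg_length {n : ℕ} (f : ℕ → Fin n) (k : ℕ) : (initSeg f k).length = k := by
  simp [initSeg]

theorem initSeg_getElem? {n : ℕ} (f : ℕ → Fin n) {k m : ℕ} (h : m < k) :
    (initSeg f k)[m]? = some (f m) := by
  simp [initSeg, List.getElem?_ofFn, h]

theorem initSeg_prefix {n : ℕ} (f : ℕ → Fin n) {k l : ℕ} (h : k ≤ l) :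
    initSeg f k <+: initSeg f l := by
  refine List.prefix_iff_eq_take.2 ?_
  apply List.ext_getElem
  · simp [initSeg]; omega
  · intro i h1 h2
    simp_all [initSeg]

theorem initSeg_eq_iff {n : ℕ} (f g : ℕ → Fin n) (k : ℕ) :
    initSeg f k = initSeg g k ↔ ∀ m < k, f m = g m := by
  constructor
  · intro h m hm
    have := congrArg (fun l => l[m]?) h
    simpa [initSeg_getElem? _ hm] using this
  · intro h
    apply List.ext_getElem <;> simp [initSeg]
    exact h

theorem initSeg_extend {n : ℕ} [Inhabited (Fin n)] (τ : List (Fin n)) {k : ℕ}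
    (h : k ≤ τ.length) :
    initSeg (fun i => τ.getD i default) k = τ.take k := by
  apply List.ext_getElem
  · simp [initSeg]; omega
  · intro i h1 h2
    simp only [initSeg, List.length_ofFn] at h1 ⊢
    rw [List.getElem_ofFn, List.getElem_take]
    simp only [List.getD_eq_getElem?_getD]
    rw [List.getElem?_eq_getElem (by omega)]
    rfl

/- ### Isolation -/

theorem exists_isolating {n : ℕ} {T : Set (List (Fin n))}
    (hfin : {f : ℕ → Fin n | IsPath T f}.Finite) (f : ℕ → Fin n) :
    ∃ N, ∀ g, IsPath T g → initSeg g N = initSeg f N → g = f := by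
  classical
  set d : (ℕ → Fin n) → ℕ := fun g =>
    if h : g = f then 0 else (Classical.choose (Function.ne_iff.mp h)) + 1 with hd
  refine ⟨hfin.toFinset.sup d, fun g hg hgf => ?_⟩
  by_contra hne
  have hk := Classical.choose_spec (Function.ne_iff.mp hne)
  have hdg : d g = Classical.choose (Function.ne_iff.mp hne) + 1 := by
    simp [hd, hne]
  have hle : d g ≤ hfin.toFinset.sup d := Finset.le_sup (by simpa using hg)
  exact hk ((initSeg_eq_iff g f _).1 hgf _ (by omega))

/- ### The key combinatorial lemma (via compactness / König) -/

theorem key_lemma {n : ℕ} {T : Set (List (Fin n))} (hT : IsTree T)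
    (f : ℕ → Fin n) (hf : IsPath T f) (N : ℕ)
    (hiso : ∀ g, IsPath T g → initSeg g N = initSeg f N → g = f) (m : ℕ) :
    ∃ L, N ≤ L ∧ m < L ∧
      ∀ τ ∈ T, τ.length = L → initSeg f N <+: τ → τ[m]? = some (f m) := by
  by_contra hcon
  push_neg at hcon
  haveI : Inhabited (Fin n) := ⟨f 0⟩
  set base := max N (m + 1) with hbase
  have hbad : ∀ j : ℕ, ∃ τ ∈ T, τ.length = base + j ∧ initSeg f N <+: τ ∧
      τ[m]? ≠ some (f m) := by
    intro j
    obtain ⟨τ, h1, h2, h3, h4⟩ := hcon (base + j) (by omega) (by omega)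
    exact ⟨τ, h1, h2, h3, h4⟩
  choose τ hτT hτlen hτpre hτne using hbad
  set g : ℕ → ℕ → Fin n := fun j i => (τ j).getD i default with hg
  letI : TopologicalSpace (Fin n) := ⊥
  haveI : DiscreteTopology (Fin n) := ⟨rfl⟩
  obtain ⟨a, φ, hφ, hlim⟩ := CompactSpace.tendsto_subseq g
  have hco : ∀ k : ℕ, ∀ᶠ j in Filter.atTop, g (φ j) k = a k := by
    intro k
    have ht : Filter.Tendsto (fun j => g (φ j) k) Filter.atTop (nhds (a k)) :=
      ((continuous_apply k).tendsto a).comp hlim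
    exact ht ((isOpen_discrete {a k}).mem_nhds rfl)
  have hK : ∀ K : ℕ, ∃ j, K ≤ φ j ∧ ∀ k < K, g (φ j) k = a k := by
    intro K
    have h1 : ∀ᶠ j in Filter.atTop, ∀ k ∈ Set.Iio K, g (φ j) k = a k :=
      (Set.finite_Iio K).eventually_all.2 (fun k _ => hco k)
    have h2 : ∀ᶠ j in Filter.atTop, K ≤ φ j :=
      hφ.tendsto_atTop.eventually (Filter.eventually_ge_atTop K)
    obtain ⟨j, hj1, hj2⟩ := (h1.and h2).exists
    exact ⟨j, hj2, fun k hk => hj1 k hk⟩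
  have hinit : ∀ K : ℕ, ∀ j, K ≤ φ j → (∀ k < K, g (φ j) k = a k) →
      initSeg a K = (τ (φ j)).take K := by
    intro K j hj hagree
    have hKlen : K ≤ (τ (φ j)).length := by rw [hτlen]; omega
    rw [← initSeg_extend (τ (φ j)) hKlen]
    rw [initSeg_eq_iff]
    intro k hk
    exact (hagree k hk).symm
  have hapath : IsPath T a := by
    intro K
    obtain ⟨j, hj1, hj2⟩ := hK K
    rw [hinit K j hj1 hj2]
    exact hT _ (hτT (φ j)) _ (List.take_prefix _ _)
  have haN : initSeg a N = initSeg f N := by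
    obtain ⟨j, hj1, hj2⟩ := hK N
    rw [hinit N j hj1 hj2]
    have h := List.prefix_iff_eq_take.1 (hτpre (φ j))
    have hlen : (initSeg f N).length = N := by simp [initSeg]
    rw [hlen] at h
    exact h.symm
  have ham : a m ≠ f m := by
    obtain ⟨j, hj1, hj2⟩ := hK (m + 1)
    have hmlen : m < (τ (φ j)).length := by rw [hτlen]; omega
    have : a m = (τ (φ j))[m] := by
      rw [← hj2 m (by omega)]
      simp [hg, List.getD_eq_getElem?_getD, List.getElem?_eq_getElem hmlen]
    intro hcontra
    apply hτne (φ j)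
    rw [List.getElem?_eq_getElem hmlen, ← this, hcontra]
  exact ham (congrFun (hiso a hapath haN) m)

/- ### Computability machinery -/

theorem rec_eq_foldl {β σ : Type*} (l : List β) (init : σ) (step : σ → β → σ) :
    ∀ k : ℕ, (Nat.rec (motive := fun _ => σ) init
      (fun i acc => Option.casesOn l[i]? acc (fun b => step acc b)) k)
      = (l.take k).foldl step init := by
  intro k
  induction k with
  | zero => simp
  | succ k ih =>
    rw [List.take_succ]
    cases h : l[k]? with
    | none => simp [ih, h]
    | some b => simp [ih, List.foldl_append, h]

theorem computable_list_foldl {α β σ : Type*} [Primcodable α] [Primcodable β] [Primcodable σ]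
    {f : α → List β} {g : α → σ} {h : α → σ × β → σ}
    (hf : Computable f) (hg : Computable g) (hh : Computable₂ h) :
    Computable fun a => (f a).foldl (fun s b => h a (s, b)) (g a) := by
  have hget : Computable₂ (fun (l : List β) (i : ℕ) => l[i]?) :=
    Computable.list_getElem?
  have H := Computable.nat_rec (Computable.list_length.comp hf) hg
    ((Computable.option_casesOn
      (hget.comp (hf.comp Computable.fst) (Computable.fst.comp Computable.snd))
      (Computable.snd.comp Computable.snd)
      ((hh.comp (Computable.fst.comp Computable.fst)
        (Computable.pair ((Computable.snd.comp Computable.snd).comp Computable.fst)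
          Computable.snd)).to₂)).to₂)
  refine H.of_eq fun a => ?_
  exact (rec_eq_foldl (f a) (g a) (fun s b => h a (s, b)) (f a).length).trans
    (by rw [List.take_length])

def allStrings (n : ℕ) : ℕ → List (List (Fin n)) := fun L =>
  Nat.rec [[]] (fun _ ih => (List.finRange n).flatMap fun a => ih.map (a :: ·)) L

theorem mem_allStrings (n : ℕ) : ∀ (L : ℕ) (τ : List (Fin n)),
    τ ∈ allStrings n L ↔ τ.length = L := by
  intro L
  induction L with
  | zero => intro τ; simp [allStrings, List.length_eq_zero_iff]
  | succ L ih =>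
    intro τ
    show τ ∈ (List.finRange n).flatMap (fun a => (allStrings n L).map (a :: ·)) ↔ _
    simp only [List.mem_flatMap, List.mem_map, List.mem_finRange, true_and]
    constructor
    · rintro ⟨a, ρ, hρ, rfl⟩
      simp [(ih ρ).1 hρ]
    · intro hlen
      cases τ with
      | nil => simp at hlen
      | cons a ρ =>
        exact ⟨a, ρ, (ih ρ).2 (by simpa using hlen), rfl⟩

theorem primrec_allStrings (n : ℕ) : Primrec (allStrings n) := by
  have hstep : Primrec₂ (fun (_ : ℕ) (ih : List (List (Fin n))) =>
      (List.finRange n).flatMap fun a => ih.map (a :: ·)) := by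
    have : Primrec fun p : ℕ × List (List (Fin n)) =>
        (List.finRange n).flatMap fun a => p.2.map (a :: ·) :=
      Primrec.list_flatMap (Primrec.const (List.finRange n))
        ((Primrec.list_map (Primrec.snd.comp Primrec.fst)
          ((Primrec.list_cons.comp (Primrec.snd.comp Primrec.fst) Primrec.snd).to₂)).to₂)
    exact this.to₂
  exact Primrec.nat_rec₁ [[]] hstep

theorem foldl_or_eq_any {β : Type*} (p : β → Bool) :
    ∀ (l : List β) (b : Bool), l.foldl (fun s x => s || p x) b = (b || l.any p) := by
  intro l
  induction l with
  | nil => simp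
  | cons a l ih => intro b; simp [ih, Bool.or_assoc]

theorem foldl_and_eq_all {β : Type*} (p : β → Bool) :
    ∀ (l : List β) (b : Bool), l.foldl (fun s x => s && p x) b = (b && l.all p) := by
  intro l
  induction l with
  | nil => simp
  | cons a l ih => intro b; simp [ih, Bool.and_assoc]

theorem prefix_iff_get? {β : Type*} (σ τ : List β) :
    σ <+: τ ↔ ∀ i < σ.length, τ[i]? = σ[i]? := by
  constructor
  · rintro ⟨t, rfl⟩ i hi
    simp [List.getElem?_append, hi]
  · intro h
    have hlen : σ.length ≤ τ.length := by
      by_contra hc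
      push_neg at hc
      have := h τ.length hc
      rw [List.getElem?_eq_none (le_refl _)] at this
      rw [List.getElem?_eq_getElem hc] at this
      simp at this
    rw [List.prefix_iff_eq_take]
    apply List.ext_getElem
    · simp [hlen]
    · intro i h1 h2
      have := h i h1
      rw [List.getElem?_eq_getElem h1] at this
      rw [List.getElem?_eq_getElem (by omega : i < τ.length)] at this
      simp only [List.getElem_take]
      exact (Option.some_injective _ this).symm

/- ### Main theorem -/

set_option maxHeartbeats 2000000

/-- If a computable tree has only finitely many infinite paths, then every
infinite path of it is a computable function. -/
theorem finite_paths_all_computable {n : ℕ} (T : Set (List (Fin n))) (hT : IsTree T)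
    (hTcomp : ComputablePred (· ∈ T))
    (hfin : {f : ℕ → Fin n | IsPath T f}.Finite) :
    ∀ f : ℕ → Fin n, IsPath T f → Computable f := by
  intro f hf
  haveI : Inhabited (Fin n) := ⟨f 0⟩
  obtain ⟨χ, hχc, hχe⟩ := ComputablePred.computable_iff.1 hTcomp
  have hmem : ∀ τ : List (Fin n), τ ∈ T ↔ χ τ = true := fun τ =>
    iff_of_eq (congrFun hχe τ)
  obtain ⟨N, hiso⟩ := exists_isolating hfin f
  have hkey := key_lemma hT f hf N hiso
  set σ : List (Fin n) := initSeg f N with hσ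
  set good : List (Fin n) → Bool := fun τ =>
    χ τ && ((List.range σ.length).foldl (fun s i => s && decide (τ[i]? = σ[i]?)) true)
    with hgood_def
  have hgood_iff : ∀ τ, good τ = true ↔ (τ ∈ T ∧ σ <+: τ) := by
    intro τ
    rw [hgood_def]
    simp only [Bool.and_eq_true, foldl_and_eq_all, Bool.true_and, List.all_eq_true,
      List.mem_range, decide_eq_true_eq]
    rw [hmem τ, prefix_iff_get?]
  set check : ℕ → ℕ → Bool := fun m c =>
    (decide (m < c.unpair.1) &&
      (allStrings n c.unpair.1).foldl (fun s τ => s || good τ) false) &&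
      (allStrings n c.unpair.1).foldl
        (fun s τ => s && (!good τ || decide (τ[m]?.map Fin.val = some c.unpair.2))) true
    with hcheck_def
  have hcheck_iff : ∀ m c, check m c = true ↔
      (m < c.unpair.1 ∧ ∃ τ : List (Fin n), τ.length = c.unpair.1 ∧ τ ∈ T ∧ σ <+: τ) ∧
      ∀ τ : List (Fin n), τ.length = c.unpair.1 → τ ∈ T → σ <+: τ →
        τ[m]?.map Fin.val = some c.unpair.2 := by
    intro m c
    rw [hcheck_def]
    simp only [Bool.and_eq_true, foldl_or_eq_any, foldl_and_eq_all, Bool.false_or,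
      Bool.true_and, List.any_eq_true, List.all_eq_true, decide_eq_true_eq,
      Bool.or_eq_true, Bool.not_eq_true', mem_allStrings]
    constructor
    · rintro ⟨⟨h1, τ, hτlen, hτgood⟩, h2⟩
      obtain ⟨hτT, hτpre⟩ := (hgood_iff τ).1 hτgood
      refine ⟨⟨h1, τ, hτlen, hτT, hτpre⟩, fun τ' hl hT' hp => ?_⟩
      rcases h2 τ' hl with h | h
      · exact absurd ((hgood_iff τ').2 ⟨hT', hp⟩) (by simp [h])
      · exact h
    · rintro ⟨⟨h1, τ, hτlen, hτT, hτpre⟩, h2⟩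
      refine ⟨⟨h1, τ, hτlen, (hgood_iff τ).2 ⟨hτT, hτpre⟩⟩, fun τ' hl => ?_⟩
      by_cases hg : good τ' = true
      · obtain ⟨hT', hp⟩ := (hgood_iff τ').1 hg
        exact Or.inr (h2 τ' hl hT' hp)
      · exact Or.inl (by simpa using hg)
  have hσlen : σ.length = N := initSeg_length f N
  have hcorrect : ∀ m c, check m c = true → c.unpair.2 = (f m).val := by
    intro m c hc
    obtain ⟨⟨hm, τ, hτlen, hτT, hτpre⟩, hall⟩ := (hcheck_iff m c).1 hc
    have hNL : N ≤ c.unpair.1 := by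
      have := hτpre.length_le
      omega
    have hτ0 := hall (initSeg f c.unpair.1) (initSeg_length f _) (hf _)
      (initSeg_prefix f hNL)
    rw [initSeg_getElem? f hm] at hτ0
    simpa using hτ0.symm
  have hex : ∀ m, ∃ c, check m c = true := by
    intro m
    obtain ⟨L, hNL, hmL, hL⟩ := hkey m
    refine ⟨Nat.pair L (f m).val, (hcheck_iff _ _).2 ?_⟩
    rw [Nat.unpair_pair]
    refine ⟨⟨hmL, initSeg f L, initSeg_length f L, hf L, initSeg_prefix f hNL⟩, ?_⟩
    intro τ hl hT' hp
    rw [hL τ hT' hl hp]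
    rfl
  -- computability of `check`
  have hgetP : Primrec₂ (fun (l : List (Fin n)) (i : ℕ) => l[i]?) :=
    Primrec.list_getElem?
  have hbandP : Primrec₂ (· && ·) := Primrec.dom_bool₂ _
  have hborP : Primrec₂ (· || ·) := Primrec.dom_bool₂ _
  have hfoldgood : Computable fun τ : List (Fin n) =>
      (List.range σ.length).foldl (fun s i => s && decide (τ[i]? = σ[i]?)) true := by
    have hdec : Primrec fun q : List (Fin n) × (Bool × ℕ) =>
        decide (q.1[q.2.2]? = σ[q.2.2]?) :=
      (Primrec.eq.comp (hgetP.comp Primrec.fst (Primrec.snd.comp Primrec.snd))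
        (hgetP.comp (Primrec.const σ) (Primrec.snd.comp Primrec.snd))).decide
    have hstep : Computable₂ fun (τ : List (Fin n)) (p : Bool × ℕ) =>
        p.1 && decide (τ[p.2]? = σ[p.2]?) :=
      ((hbandP.comp (Primrec.fst.comp Primrec.snd) hdec).to_comp).to₂
    exact computable_list_foldl (Computable.const (List.range σ.length))
      (Computable.const true) hstep
  have hgoodc : Computable good := by
    have := Computable.cond hχc hfoldgood (Computable.const false)
    refine this.of_eq fun τ => ?_
    rw [hgood_def]
    cases hb : χ τ <;> simp [hb]
  have hLc : Computable fun a : ℕ × ℕ => a.2.unpair.1 :=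
    (Primrec.fst.comp (Primrec.unpair.comp Primrec.snd)).to_comp
  have hallS : Computable fun a : ℕ × ℕ => allStrings n a.2.unpair.1 :=
    (primrec_allStrings n).to_comp.comp hLc
  have hanyc : Computable fun a : ℕ × ℕ =>
      (allStrings n a.2.unpair.1).foldl (fun s τ => s || good τ) false :=
    computable_list_foldl hallS (Computable.const false)
      ((hborP.to_comp.comp (Computable.fst.comp Computable.snd)
        (hgoodc.comp (Computable.snd.comp Computable.snd))).to₂)
  have hallc : Computable fun a : ℕ × ℕ =>
      (allStrings n a.2.unpair.1).foldl
        (fun s τ => s && (!good τ || decide (τ[a.1]?.map Fin.val = some a.2.unpair.2)))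
        true := by
    have hagree : Primrec fun q : (ℕ × ℕ) × (Bool × List (Fin n)) =>
        decide (q.2.2[q.1.1]?.map Fin.val = some q.1.2.unpair.2) :=
      (Primrec.eq.comp
        (Primrec.option_map
          (hgetP.comp (Primrec.snd.comp Primrec.snd) (Primrec.fst.comp Primrec.fst))
          ((Primrec.fin_val.comp Primrec.snd).to₂))
        (Primrec.option_some.comp
          (Primrec.snd.comp (Primrec.unpair.comp (Primrec.snd.comp Primrec.fst))))).decide
    have hnotgood : Computable fun q : (ℕ × ℕ) × (Bool × List (Fin n)) => !good q.2.2 :=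
      (Primrec.dom_bool (!·)).to_comp.comp (hgoodc.comp (Computable.snd.comp Computable.snd))
    have hstep : Computable₂ fun (a : ℕ × ℕ) (p : Bool × List (Fin n)) =>
        p.1 && (!good p.2 || decide (p.2[a.1]?.map Fin.val = some a.2.unpair.2)) :=
      (hbandP.to_comp.comp (Computable.fst.comp Computable.snd)
        (hborP.to_comp.comp hnotgood hagree.to_comp)).to₂
    exact computable_list_foldl hallS (Computable.const true) hstep
  have hltc : Computable fun a : ℕ × ℕ => decide (a.1 < a.2.unpair.1) :=
    (Primrec.nat_lt.comp Primrec.fst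
      (Primrec.fst.comp (Primrec.unpair.comp Primrec.snd))).decide.to_comp
  have hcheckc : Computable₂ check := by
    rw [hcheck_def]
    exact (hbandP.to_comp.comp (hbandP.to_comp.comp hltc hanyc) hallc).to₂
  -- search
  have hrf : Partrec fun m : ℕ =>
      (Nat.rfind fun c => (check m c : Part Bool)).map fun c => c.unpair.2 :=
    (Partrec.rfind hcheckc.partrec₂).map
      (((Primrec.snd.comp (Primrec.unpair.comp Primrec.snd)).to_comp).to₂)
  have hval : Computable fun m => (f m).val := by
    refine hrf.of_eq_tot fun m => ?_
    obtain ⟨c₀, hc₀⟩ := hex m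
    obtain ⟨c, hcmem, -⟩ := Nat.rfind_min' hc₀
    have hcc : check m c = true := by
      have := Nat.rfind_spec hcmem
      simpa using this
    have h2 : (Nat.unpair c).2 ∈ Part.map (fun c : ℕ => (Nat.unpair c).2)
        (Nat.rfind ↑(check m)) := Part.mem_map (fun c : ℕ => (Nat.unpair c).2) hcmem
    rw [hcorrect m c hcc] at h2
    exact h2
  have henc : (fun m => Encodable.encode (f m)) = fun m => (f m).val := rfl
  exact Computable.encode_iff.1 (henc ▸ hval)
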